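/- Let m be a positive integer, R a commutative ring which is an ℝ-algebra (modeling the algebra of even-degree differential forms on a chart), and η = diag(1, −1, …, −1) ∈ Mₘ(ℝ) regarded in Mₘ(R). For a row vector q over R set q^t := η⁻¹qᵀ and k₁(q) := [[1, q, ½ q q^t],[0, 1ₘ, q^t],[0, 0, 1]] (blocks of sizes (1, m, 1)). Let Ω be the block matrix Ω = [[f, Π, 0],[Θ, F, η⁻¹Πᵀ],[0, Θᵀη, −f]] with f ∈ R, Π ∈ R^{1×m}, Θ ∈ R^{m×1}, F ∈ Mₘ(R). Then the matrix Ω₁ := k₁(q)⁻¹ · Ω · k₁(q) has the following blocks: its (1,1) block is f − qΘ, its (2,1) block is Θ, its (2,2) block is F₁ := Θq + F − q^tΘᵀη, its (1,2) block is Π − qF₁ + fq − ½(q q^t)Θᵀη, its (3,2) block is Θᵀη, and its (3,3) block is −(f − qΘ). In particular, the torsion block Θ is unchanged by the dressing by u₁ = k₁(q). -/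

import Mathlib

open Matrix

/-- 3×3 block matrix with block sizes (1, m, 1). -/
def B3 {R : Type*} {m : ℕ}
    (a11 : Matrix (Fin 1) (Fin 1) R) (a12 : Matrix (Fin 1) (Fin m) R) (a13 : Matrix (Fin 1) (Fin 1) R)
    (a21 : Matrix (Fin m) (Fin 1) R) (a22 : Matrix (Fin m) (Fin m) R) (a23 : Matrix (Fin m) (Fin 1) R)
    (a31 : Matrix (Fin 1) (Fin 1) R) (a32 : Matrix (Fin 1) (Fin m) R) (a33 : Matrix (Fin 1) (Fin 1) R) :
    Matrix (Fin 1 ⊕ (Fin m ⊕ Fin 1)) (Fin 1 ⊕ (Fin m ⊕ Fin 1)) R :=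
  Matrix.fromBlocks a11 (Matrix.fromCols a12 a13) (Matrix.fromRows a21 a31)
    (Matrix.fromBlocks a22 a23 a32 a33)

/-- Block extractors for a 3×3 block matrix with block sizes (1, m, 1). -/
def blk11 {R : Type*} {m : ℕ} (M : Matrix (Fin 1 ⊕ (Fin m ⊕ Fin 1)) (Fin 1 ⊕ (Fin m ⊕ Fin 1)) R) :
    Matrix (Fin 1) (Fin 1) R := M.submatrix Sum.inl Sum.inl
def blk12 {R : Type*} {m : ℕ} (M : Matrix (Fin 1 ⊕ (Fin m ⊕ Fin 1)) (Fin 1 ⊕ (Fin m ⊕ Fin 1)) R) :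
    Matrix (Fin 1) (Fin m) R := M.submatrix Sum.inl (fun j => Sum.inr (Sum.inl j))
def blk13 {R : Type*} {m : ℕ} (M : Matrix (Fin 1 ⊕ (Fin m ⊕ Fin 1)) (Fin 1 ⊕ (Fin m ⊕ Fin 1)) R) :
    Matrix (Fin 1) (Fin 1) R := M.submatrix Sum.inl (fun j => Sum.inr (Sum.inr j))
def blk21 {R : Type*} {m : ℕ} (M : Matrix (Fin 1 ⊕ (Fin m ⊕ Fin 1)) (Fin 1 ⊕ (Fin m ⊕ Fin 1)) R) :
    Matrix (Fin m) (Fin 1) R := M.submatrix (fun i => Sum.inr (Sum.inl i)) Sum.inl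
def blk22 {R : Type*} {m : ℕ} (M : Matrix (Fin 1 ⊕ (Fin m ⊕ Fin 1)) (Fin 1 ⊕ (Fin m ⊕ Fin 1)) R) :
    Matrix (Fin m) (Fin m) R := M.submatrix (fun i => Sum.inr (Sum.inl i)) (fun j => Sum.inr (Sum.inl j))
def blk23 {R : Type*} {m : ℕ} (M : Matrix (Fin 1 ⊕ (Fin m ⊕ Fin 1)) (Fin 1 ⊕ (Fin m ⊕ Fin 1)) R) :
    Matrix (Fin m) (Fin 1) R := M.submatrix (fun i => Sum.inr (Sum.inl i)) (fun j => Sum.inr (Sum.inr j))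
def blk31 {R : Type*} {m : ℕ} (M : Matrix (Fin 1 ⊕ (Fin m ⊕ Fin 1)) (Fin 1 ⊕ (Fin m ⊕ Fin 1)) R) :
    Matrix (Fin 1) (Fin 1) R := M.submatrix (fun i => Sum.inr (Sum.inr i)) Sum.inl
def blk32 {R : Type*} {m : ℕ} (M : Matrix (Fin 1 ⊕ (Fin m ⊕ Fin 1)) (Fin 1 ⊕ (Fin m ⊕ Fin 1)) R) :
    Matrix (Fin 1) (Fin m) R := M.submatrix (fun i => Sum.inr (Sum.inr i)) (fun j => Sum.inr (Sum.inl j))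
def blk33 {R : Type*} {m : ℕ} (M : Matrix (Fin 1 ⊕ (Fin m ⊕ Fin 1)) (Fin 1 ⊕ (Fin m ⊕ Fin 1)) R) :
    Matrix (Fin 1) (Fin 1) R := M.submatrix (fun i => Sum.inr (Sum.inr i)) (fun j => Sum.inr (Sum.inr j))

/-- The Minkowski matrix `diag(1, −1, …, −1)` of signature `(1, m−1)`, regarded in `Mₘ(R)`. -/
def MinkR (m : ℕ) (R : Type*) [CommRing R] [Algebra ℝ R] : Matrix (Fin m) (Fin m) R :=
  (Matrix.diagonal fun i : Fin m => if (i : ℕ) = 0 then (1 : ℝ) else -1).map (algebraMap ℝ R)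

/-- For a row vector `q` over `R`, the column vector `q^t := η⁻¹ qᵀ`. -/
noncomputable def rTR {m : ℕ} {R : Type*} [CommRing R] [Algebra ℝ R]
    (q : Matrix (Fin 1) (Fin m) R) : Matrix (Fin m) (Fin 1) R :=
  (MinkR m R)⁻¹ * q.transpose

/-- The special conformal (inversion) group element
`k₁(q) = [[1, q, ½ q q^t],[0, 1ₘ, q^t],[0, 0, 1]]` over `R`. -/
noncomputable def k1R {m : ℕ} {R : Type*} [CommRing R] [Algebra ℝ R]
    (q : Matrix (Fin 1) (Fin m) R) :
    Matrix (Fin 1 ⊕ (Fin m ⊕ Fin 1)) (Fin 1 ⊕ (Fin m ⊕ Fin 1)) R :=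
  B3 1 q ((2⁻¹ : ℝ) • (q * rTR q)) 0 1 (rTR q) 0 0 1

section Aux
variable {R : Type*} [CommRing R] {m : ℕ}

lemma fromColumns_add' {n n₁ n₂ : Type*} (A B : Matrix n n₁ R) (C D : Matrix n n₂ R) :
    fromCols A C + fromCols B D = fromCols (A + B) (C + D) := by
  ext _ (_ | _) <;> simp

lemma fromRows_add' {n n₁ n₂ : Type*} (A B : Matrix n₁ n R) (C D : Matrix n₂ n R) :
    fromRows A C + fromRows B D = fromRows (A + B) (C + D) := by
  ext (_ | _) _ <;> simp

lemma B3_mul (a11 : Matrix (Fin 1) (Fin 1) R) (a12 : Matrix (Fin 1) (Fin m) R) (a13 : Matrix (Fin 1) (Fin 1) R)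
    (a21 : Matrix (Fin m) (Fin 1) R) (a22 : Matrix (Fin m) (Fin m) R) (a23 : Matrix (Fin m) (Fin 1) R)
    (a31 : Matrix (Fin 1) (Fin 1) R) (a32 : Matrix (Fin 1) (Fin m) R) (a33 : Matrix (Fin 1) (Fin 1) R)
    (b11 : Matrix (Fin 1) (Fin 1) R) (b12 : Matrix (Fin 1) (Fin m) R) (b13 : Matrix (Fin 1) (Fin 1) R)
    (b21 : Matrix (Fin m) (Fin 1) R) (b22 : Matrix (Fin m) (Fin m) R) (b23 : Matrix (Fin m) (Fin 1) R)
    (b31 : Matrix (Fin 1) (Fin 1) R) (b32 : Matrix (Fin 1) (Fin m) R) (b33 : Matrix (Fin 1) (Fin 1) R) :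
    (B3 a11 a12 a13 a21 a22 a23 a31 a32 a33 : Matrix _ _ R) * B3 b11 b12 b13 b21 b22 b23 b31 b32 b33
      = B3 (a11*b11 + a12*b21 + a13*b31) (a11*b12 + a12*b22 + a13*b32) (a11*b13 + a12*b23 + a13*b33)
           (a21*b11 + a22*b21 + a23*b31) (a21*b12 + a22*b22 + a23*b32) (a21*b13 + a22*b23 + a23*b33)
           (a31*b11 + a32*b21 + a33*b31) (a31*b12 + a32*b22 + a33*b32) (a31*b13 + a32*b23 + a33*b33) := by
  simp only [B3, fromBlocks_multiply, fromCols_mul_fromRows, fromRows_mul,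
    mul_fromCols, fromCols_mul_fromBlocks, fromBlocks_mul_fromRows,
    fromColumns_add', fromRows_add', fromCols_fromRows_eq_fromBlocks, fromBlocks_add,
    add_assoc]

lemma B3_one : (B3 (m := m) 1 0 0 0 1 0 0 0 1 : Matrix _ _ R) = 1 := by
  simp only [B3, fromCols_zero, fromRows_zero, fromBlocks_one]

lemma blk11_B3 (a11 : Matrix (Fin 1) (Fin 1) R) (a12 : Matrix (Fin 1) (Fin m) R) (a13 : Matrix (Fin 1) (Fin 1) R)
    (a21 : Matrix (Fin m) (Fin 1) R) (a22 : Matrix (Fin m) (Fin m) R) (a23 : Matrix (Fin m) (Fin 1) R)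
    (a31 : Matrix (Fin 1) (Fin 1) R) (a32 : Matrix (Fin 1) (Fin m) R) (a33 : Matrix (Fin 1) (Fin 1) R) :
    blk11 (B3 a11 a12 a13 a21 a22 a23 a31 a32 a33) = a11 := by
  ext i j; simp [blk11, B3]

lemma blk12_B3 (a11 : Matrix (Fin 1) (Fin 1) R) (a12 : Matrix (Fin 1) (Fin m) R) (a13 : Matrix (Fin 1) (Fin 1) R)
    (a21 : Matrix (Fin m) (Fin 1) R) (a22 : Matrix (Fin m) (Fin m) R) (a23 : Matrix (Fin m) (Fin 1) R)
    (a31 : Matrix (Fin 1) (Fin 1) R) (a32 : Matrix (Fin 1) (Fin m) R) (a33 : Matrix (Fin 1) (Fin 1) R) :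
    blk12 (B3 a11 a12 a13 a21 a22 a23 a31 a32 a33) = a12 := by
  ext i j; simp [blk12, B3]

lemma blk21_B3 (a11 : Matrix (Fin 1) (Fin 1) R) (a12 : Matrix (Fin 1) (Fin m) R) (a13 : Matrix (Fin 1) (Fin 1) R)
    (a21 : Matrix (Fin m) (Fin 1) R) (a22 : Matrix (Fin m) (Fin m) R) (a23 : Matrix (Fin m) (Fin 1) R)
    (a31 : Matrix (Fin 1) (Fin 1) R) (a32 : Matrix (Fin 1) (Fin m) R) (a33 : Matrix (Fin 1) (Fin 1) R) :
    blk21 (B3 a11 a12 a13 a21 a22 a23 a31 a32 a33) = a21 := by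
  ext i j; simp [blk21, B3]

lemma blk22_B3 (a11 : Matrix (Fin 1) (Fin 1) R) (a12 : Matrix (Fin 1) (Fin m) R) (a13 : Matrix (Fin 1) (Fin 1) R)
    (a21 : Matrix (Fin m) (Fin 1) R) (a22 : Matrix (Fin m) (Fin m) R) (a23 : Matrix (Fin m) (Fin 1) R)
    (a31 : Matrix (Fin 1) (Fin 1) R) (a32 : Matrix (Fin 1) (Fin m) R) (a33 : Matrix (Fin 1) (Fin 1) R) :
    blk22 (B3 a11 a12 a13 a21 a22 a23 a31 a32 a33) = a22 := by
  ext i j; simp [blk22, B3]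

lemma blk32_B3 (a11 : Matrix (Fin 1) (Fin 1) R) (a12 : Matrix (Fin 1) (Fin m) R) (a13 : Matrix (Fin 1) (Fin 1) R)
    (a21 : Matrix (Fin m) (Fin 1) R) (a22 : Matrix (Fin m) (Fin m) R) (a23 : Matrix (Fin m) (Fin 1) R)
    (a31 : Matrix (Fin 1) (Fin 1) R) (a32 : Matrix (Fin 1) (Fin m) R) (a33 : Matrix (Fin 1) (Fin 1) R) :
    blk32 (B3 a11 a12 a13 a21 a22 a23 a31 a32 a33) = a32 := by
  ext i j; simp [blk32, B3]

lemma blk33_B3 (a11 : Matrix (Fin 1) (Fin 1) R) (a12 : Matrix (Fin 1) (Fin m) R) (a13 : Matrix (Fin 1) (Fin 1) R)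
    (a21 : Matrix (Fin m) (Fin 1) R) (a22 : Matrix (Fin m) (Fin m) R) (a23 : Matrix (Fin m) (Fin 1) R)
    (a31 : Matrix (Fin 1) (Fin 1) R) (a32 : Matrix (Fin 1) (Fin m) R) (a33 : Matrix (Fin 1) (Fin 1) R) :
    blk33 (B3 a11 a12 a13 a21 a22 a23 a31 a32 a33) = a33 := by
  ext i j; simp [blk33, B3]

end Aux

section Eta
variable {m : ℕ} {R : Type*} [CommRing R] [Algebra ℝ R]

lemma MinkR_sq : MinkR m R * MinkR m R = 1 := by
  rw [MinkR, ← Matrix.map_mul (f := algebraMap ℝ R), diagonal_mul_diagonal,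
    show (fun i : Fin m => (if (i : ℕ) = 0 then (1:ℝ) else -1) * (if (i : ℕ) = 0 then (1:ℝ) else -1))
      = fun _ => (1:ℝ) from funext fun i => by split_ifs <;> norm_num,
    diagonal_one, Matrix.map_one _ (map_zero _) (map_one _)]

lemma MinkR_inv : (MinkR m R)⁻¹ = MinkR m R := inv_eq_right_inv MinkR_sq

lemma rTR_neg (q : Matrix (Fin 1) (Fin m) R) : rTR (-q) = -(rTR q) := by
  simp [rTR]

lemma eta_rTR (Θ : Matrix (Fin m) (Fin 1) R) (q : Matrix (Fin 1) (Fin m) R) :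
    Θ.transpose * MinkR m R * rTR q = q * Θ := by
  rw [rTR, MinkR_inv, Matrix.mul_assoc, ← Matrix.mul_assoc (MinkR m R), MinkR_sq, Matrix.one_mul,
    ← Matrix.transpose_mul]
  ext i j
  fin_cases i <;> fin_cases j <;> rfl

lemma B3_ext {a11 b11 : Matrix (Fin 1) (Fin 1) R} {a12 b12 : Matrix (Fin 1) (Fin m) R}
    {a13 b13 : Matrix (Fin 1) (Fin 1) R} {a21 b21 : Matrix (Fin m) (Fin 1) R}
    {a22 b22 : Matrix (Fin m) (Fin m) R} {a23 b23 : Matrix (Fin m) (Fin 1) R}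
    {a31 b31 : Matrix (Fin 1) (Fin 1) R} {a32 b32 : Matrix (Fin 1) (Fin m) R}
    {a33 b33 : Matrix (Fin 1) (Fin 1) R}
    (h11 : a11 = b11) (h12 : a12 = b12) (h13 : a13 = b13)
    (h21 : a21 = b21) (h22 : a22 = b22) (h23 : a23 = b23)
    (h31 : a31 = b31) (h32 : a32 = b32) (h33 : a33 = b33) :
    B3 a11 a12 a13 a21 a22 a23 a31 a32 a33 = B3 b11 b12 b13 b21 b22 b23 b31 b32 b33 := by
  subst_vars; rfl

lemma k1R_inv (q : Matrix (Fin 1) (Fin m) R) : (k1R q)⁻¹ = k1R (-q) := by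
  apply inv_eq_left_inv
  rw [k1R, k1R, B3_mul, rTR_neg, ← B3_one]
  apply B3_ext <;>
    simp only [Matrix.one_mul, Matrix.mul_one, Matrix.mul_zero, Matrix.zero_mul, add_zero,
      zero_add, Matrix.neg_mul, Matrix.mul_neg, neg_neg, smul_mul_assoc, mul_smul_comm, Matrix.smul_mul, Matrix.mul_smul,
      smul_neg, smul_zero, Matrix.mul_assoc] <;>
    first | rfl | module | abel
end Eta

/-- Dressing the conformal Cartan curvature `Ω = [[f, Pform, 0],[Θ, F, η⁻¹Pformᵀ],[0, Θᵀη, −f]]`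
by `u₁ = k₁(q)`: the blocks of `Ω₁ = k₁(q)⁻¹ Ω k₁(q)`. In particular the torsion block `Θ`
is unchanged. -/
theorem stmt_9 (m : ℕ) (hm : 0 < m) (R : Type*) [CommRing R] [Algebra ℝ R]
    (q : Matrix (Fin 1) (Fin m) R)
    (f : R) (Pform : Matrix (Fin 1) (Fin m) R) (Θ : Matrix (Fin m) (Fin 1) R)
    (F : Matrix (Fin m) (Fin m) R) :
    blk11 ((k1R q)⁻¹ * B3 (f • 1) Pform 0 Θ F ((MinkR m R)⁻¹ * Pform.transpose)
        0 (Θ.transpose * MinkR m R) ((-f) • 1) * k1R q) = f • 1 - q * Θ ∧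
    blk21 ((k1R q)⁻¹ * B3 (f • 1) Pform 0 Θ F ((MinkR m R)⁻¹ * Pform.transpose)
        0 (Θ.transpose * MinkR m R) ((-f) • 1) * k1R q) = Θ ∧
    blk22 ((k1R q)⁻¹ * B3 (f • 1) Pform 0 Θ F ((MinkR m R)⁻¹ * Pform.transpose)
        0 (Θ.transpose * MinkR m R) ((-f) • 1) * k1R q)
      = Θ * q + F - rTR q * (Θ.transpose * MinkR m R) ∧
    blk12 ((k1R q)⁻¹ * B3 (f • 1) Pform 0 Θ F ((MinkR m R)⁻¹ * Pform.transpose)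
        0 (Θ.transpose * MinkR m R) ((-f) • 1) * k1R q)
      = Pform - q * (Θ * q + F - rTR q * (Θ.transpose * MinkR m R)) + f • q
          - (2⁻¹ : ℝ) • ((q * rTR q) * (Θ.transpose * MinkR m R)) ∧
    blk32 ((k1R q)⁻¹ * B3 (f • 1) Pform 0 Θ F ((MinkR m R)⁻¹ * Pform.transpose)
        0 (Θ.transpose * MinkR m R) ((-f) • 1) * k1R q) = Θ.transpose * MinkR m R ∧
    blk33 ((k1R q)⁻¹ * B3 (f • 1) Pform 0 Θ F ((MinkR m R)⁻¹ * Pform.transpose)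
        0 (Θ.transpose * MinkR m R) ((-f) • 1) * k1R q) = -(f • 1 - q * Θ) := by
  rw [k1R_inv, k1R, k1R, B3_mul, B3_mul, rTR_neg]
  refine ⟨?_, ?_, ?_, ?_, ?_, ?_⟩
  · rw [blk11_B3]
    simp only [Matrix.one_mul, Matrix.mul_one, Matrix.mul_zero, Matrix.zero_mul, add_zero,
      zero_add, Matrix.neg_mul, Matrix.mul_neg, neg_neg, smul_mul_assoc, mul_smul_comm, Matrix.smul_mul, Matrix.mul_smul,
      smul_neg, smul_zero, Matrix.mul_assoc]
    module
  · rw [blk21_B3]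
    simp only [Matrix.one_mul, Matrix.mul_one, Matrix.mul_zero, Matrix.zero_mul, add_zero,
      zero_add, Matrix.neg_mul, Matrix.mul_neg, neg_neg, smul_mul_assoc, mul_smul_comm, Matrix.smul_mul, Matrix.mul_smul,
      smul_neg, smul_zero, Matrix.mul_assoc]
  · rw [blk22_B3]
    simp only [Matrix.one_mul, Matrix.mul_one, Matrix.mul_zero, Matrix.zero_mul, add_zero,
      zero_add, Matrix.neg_mul, Matrix.mul_neg, neg_neg, smul_mul_assoc, mul_smul_comm, Matrix.smul_mul, Matrix.mul_smul,
      smul_neg, smul_zero, Matrix.mul_assoc]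
    module
  · rw [blk12_B3]
    simp only [Matrix.one_mul, Matrix.mul_one, Matrix.mul_zero, Matrix.zero_mul, add_zero,
      zero_add, Matrix.neg_mul, Matrix.mul_neg, neg_neg, smul_mul_assoc, mul_smul_comm, Matrix.smul_mul, Matrix.mul_smul,
      smul_neg, smul_zero, Matrix.add_mul, Matrix.mul_add, Matrix.mul_sub, Matrix.sub_mul,
      Matrix.mul_assoc]
    have h2 : (algebraMap ℝ R) 2⁻¹ + (algebraMap ℝ R) 2⁻¹ = 1 := by
      rw [← map_add]; norm_num
    match_scalars <;> first | ring1 | linear_combination h2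
  · rw [blk32_B3]
    simp only [Matrix.one_mul, Matrix.mul_one, Matrix.mul_zero, Matrix.zero_mul, add_zero,
      zero_add, Matrix.neg_mul, Matrix.mul_neg, neg_neg, smul_mul_assoc, mul_smul_comm, Matrix.smul_mul, Matrix.mul_smul,
      smul_neg, smul_zero, Matrix.mul_assoc]
  · rw [blk33_B3]
    simp only [Matrix.one_mul, Matrix.mul_one, Matrix.mul_zero, Matrix.zero_mul, add_zero,
      zero_add, Matrix.neg_mul, Matrix.mul_neg, neg_neg, smul_mul_assoc, mul_smul_comm, Matrix.smul_mul, Matrix.mul_smul,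
      smul_neg, smul_zero, Matrix.mul_assoc, neg_smul]
    rw [← Matrix.mul_assoc, eta_rTR]
    module
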